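/- Let ℓ₁, ℓ₂, ℓ₃ be linear forms on ℝ² such that (ℓ₁⊗ℓ₁, ℓ₂⊗ℓ₂, ℓ₃⊗ℓ₃) is a basis of the space S₂(ℝ²) of symmetric bilinear forms on ℝ², with coordinate functionals H₁, H₂, H₃, and set h_max = max(‖H₁‖, ‖H₂‖, ‖H₃‖) and C_H = 1 + h_max·‖ℓ₂⊗ℓ₂‖ + h_max·‖ℓ₃⊗ℓ₃‖. Let D₁, D₂, D₃, D₄, Err₁, Err₂, Err₃ ∈ S₂(ℝ²) satisfy D_{i+1} = D_i − H_i(D_i)·ℓᵢ⊗ℓᵢ + Err_i for i = 1, 2, 3. Then ‖D₄‖ ≤ C_H·(‖Err₁‖ + ‖Err₂‖ + ‖Err₃‖). -/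

import Mathlib

noncomputable section

abbrev E2 := EuclideanSpace ℝ (Fin 2)

/-- The space of (bi)linear forms on `ℝ²`. -/
abbrev S2 := E2 →ₗ[ℝ] E2 →ₗ[ℝ] ℝ

/-- The norm `‖b‖ = sup_{v ≠ 0} |b(v,v)|/‖v‖²` of a bilinear form on `ℝ²`. -/
noncomputable def bnorm (b : S2) : ℝ :=
  ⨆ v : E2, |b v v| / ‖v‖ ^ 2

/-- The symmetric bilinear form `ℓ ⊗ ℓ : (v,w) ↦ ℓ(v)·ℓ(w)`. -/
noncomputable def tsq (l : E2 →ₗ[ℝ] ℝ) : S2 := l.smulRight l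

noncomputable def ee (i : Fin 2) : E2 := EuclideanSpace.single i (1:ℝ)

lemma norm_sq_eq (v : E2) : ‖v‖ ^ 2 = ∑ j, v j ^ 2 := by
  rw [EuclideanSpace.norm_eq, Real.sq_sqrt (Finset.sum_nonneg fun j _ => sq_nonneg _)]
  simp [sq_abs]

lemma coord_le (v : E2) (i : Fin 2) : |v i| ≤ ‖v‖ := by
  have h := norm_sq_eq v
  have h2 : v i ^ 2 ≤ ‖v‖ ^ 2 := by
    rw [h]; exact Finset.single_le_sum (f := fun j => v j ^ 2) (fun j _ => sq_nonneg _) (Finset.mem_univ i)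
  have := norm_nonneg v
  nlinarith [abs_nonneg (v i), sq_abs (v i)]

lemma decomp (v : E2) : v = v 0 • ee 0 + v 1 • ee 1 := by
  ext i; fin_cases i <;> simp [ee]

lemma bilin_bound (B : S2) (v : E2) : |B v v| ≤
    (|B (ee 0) (ee 0)| + |B (ee 0) (ee 1)| + |B (ee 1) (ee 0)| + |B (ee 1) (ee 1)|) * ‖v‖ ^ 2 := by
  have expand : B v v = v 0 * v 0 * B (ee 0) (ee 0) + v 0 * v 1 * B (ee 0) (ee 1)
      + v 1 * v 0 * B (ee 1) (ee 0) + v 1 * v 1 * B (ee 1) (ee 1) := by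
    conv_lhs => rw [decomp v]
    simp [map_add, map_smul]
    ring
  rw [expand]
  have h0 := coord_le v 0
  have h1 := coord_le v 1
  have hn := norm_nonneg v
  have key : ∀ a b : ℝ, |a| ≤ ‖v‖ → |b| ≤ ‖v‖ → ∀ c : ℝ, |a * b * c| ≤ |c| * ‖v‖^2 := by
    intro a b ha hb c
    rw [abs_mul, abs_mul, mul_comm, sq]
    exact mul_le_mul le_rfl (mul_le_mul ha hb (abs_nonneg b) hn) (by positivity) (abs_nonneg c)
  calc |_| ≤ |v 0 * v 0 * B (ee 0) (ee 0)| + |v 0 * v 1 * B (ee 0) (ee 1)|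
      + |v 1 * v 0 * B (ee 1) (ee 0)| + |v 1 * v 1 * B (ee 1) (ee 1)| := by
        exact (abs_add_le _ _).trans (by gcongr <;> exact (abs_add_le _ _).trans (by gcongr; exact abs_add_le _ _))
    _ ≤ _ := by
        have k1 := key _ _ h0 h0 (B (ee 0) (ee 0))
        have k2 := key _ _ h0 h1 (B (ee 0) (ee 1))
        have k3 := key _ _ h1 h0 (B (ee 1) (ee 0))
        have k4 := key _ _ h1 h1 (B (ee 1) (ee 1))
        nlinarith [sq_nonneg ‖v‖]

lemma bdd (B : S2) : BddAbove (Set.range fun v : E2 => |B v v| / ‖v‖ ^ 2) := by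
  refine ⟨|B (ee 0) (ee 0)| + |B (ee 0) (ee 1)| + |B (ee 1) (ee 0)| + |B (ee 1) (ee 1)|, ?_⟩
  rintro x ⟨v, rfl⟩
  rcases eq_or_ne v 0 with rfl | hv
  · simp; positivity
  · rw [div_le_iff₀ (pow_pos (norm_pos_iff.mpr hv) 2)]
    exact bilin_bound B v

lemma bnorm_nonneg (B : S2) : 0 ≤ bnorm B :=
  Real.iSup_nonneg fun v => by positivity

lemma le_bnorm (B : S2) (v : E2) : |B v v| ≤ bnorm B * ‖v‖ ^ 2 := by
  rcases eq_or_ne v 0 with rfl | hv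
  · simp
  · rw [← div_le_iff₀ (pow_pos (norm_pos_iff.mpr hv) 2)]
    exact le_ciSup (bdd B) v

lemma bnorm_le (B : S2) (C : ℝ) (hC : 0 ≤ C) (h : ∀ v : E2, |B v v| ≤ C * ‖v‖ ^ 2) :
    bnorm B ≤ C := by
  refine ciSup_le fun v => ?_
  rcases eq_or_ne v 0 with rfl | hv
  · simpa using hC
  · rw [div_le_iff₀ (pow_pos (norm_pos_iff.mpr hv) 2)]; exact h v

lemma bnorm_add_le (B C : S2) : bnorm (B + C) ≤ bnorm B + bnorm C := by
  refine bnorm_le _ _ (add_nonneg (bnorm_nonneg B) (bnorm_nonneg C)) fun v => ?_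
  have := le_bnorm B v
  have := le_bnorm C v
  simp only [LinearMap.add_apply]
  calc |B v v + C v v| ≤ |B v v| + |C v v| := abs_add_le _ _
    _ ≤ _ := by nlinarith

lemma bnorm_smul_le (c : ℝ) (B : S2) : bnorm (c • B) ≤ |c| * bnorm B := by
  refine bnorm_le _ _ (mul_nonneg (abs_nonneg c) (bnorm_nonneg B)) fun v => ?_
  have := le_bnorm B v
  simp only [LinearMap.smul_apply, smul_eq_mul, abs_mul]
  nlinarith [abs_nonneg c, abs_nonneg (B v v)]


/-- Bound on the residual isometric default after a full round of three corrugations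
(Lemma 4.4 of the paper): `‖D₄‖ ≤ C_H·(‖Err₁‖ + ‖Err₂‖ + ‖Err₃‖)` with
`C_H = 1 + h_max·‖ℓ₂⊗ℓ₂‖ + h_max·‖ℓ₃⊗ℓ₃‖`. -/
theorem stmt14 (ℓ₁ ℓ₂ ℓ₃ : E2 →ₗ[ℝ] ℝ)
    (H₁ H₂ H₃ : S2 →ₗ[ℝ] ℝ)
    -- (ℓᵢ⊗ℓᵢ) spans the symmetric forms, with coordinates (Hᵢ)
    (hbasis : ∀ B : S2, (∀ v w : E2, B v w = B w v) →
      B = H₁ B • tsq ℓ₁ + H₂ B • tsq ℓ₂ + H₃ B • tsq ℓ₃)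
    -- (ℓᵢ⊗ℓᵢ) is linearly independent
    (hindep : ∀ c₁ c₂ c₃ : ℝ,
      c₁ • tsq ℓ₁ + c₂ • tsq ℓ₂ + c₃ • tsq ℓ₃ = 0 → c₁ = 0 ∧ c₂ = 0 ∧ c₃ = 0)
    -- h_max bounds the three coordinate functionals: |Hᵢ(B)| ≤ h_max·‖B‖
    (hmax : ℝ)
    (hH : ∀ B : S2,
      |H₁ B| ≤ hmax * bnorm B ∧ |H₂ B| ≤ hmax * bnorm B ∧ |H₃ B| ≤ hmax * bnorm B)
    (D₁ D₂ D₃ D₄ Err₁ Err₂ Err₃ : S2)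
    (hsD₁ : ∀ v w : E2, D₁ v w = D₁ w v)
    (hsD₂ : ∀ v w : E2, D₂ v w = D₂ w v)
    (hsD₃ : ∀ v w : E2, D₃ v w = D₃ w v)
    (hsD₄ : ∀ v w : E2, D₄ v w = D₄ w v)
    (hsE₁ : ∀ v w : E2, Err₁ v w = Err₁ w v)
    (hsE₂ : ∀ v w : E2, Err₂ v w = Err₂ w v)
    (hsE₃ : ∀ v w : E2, Err₃ v w = Err₃ w v)
    (h2 : D₂ = D₁ - H₁ D₁ • tsq ℓ₁ + Err₁)
    (h3 : D₃ = D₂ - H₂ D₂ • tsq ℓ₂ + Err₂)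
    (h4 : D₄ = D₃ - H₃ D₃ • tsq ℓ₃ + Err₃) :
    bnorm D₄ ≤ (1 + hmax * bnorm (tsq ℓ₂) + hmax * bnorm (tsq ℓ₃))
      * (bnorm Err₁ + bnorm Err₂ + bnorm Err₃) := by
  letI : AddCommGroup (E2 →ₗ[ℝ] ℝ) := LinearMap.addCommGroup
  letI : AddCommGroup S2 := LinearMap.addCommGroup
  have hsymm : ∀ l : E2 →ₗ[ℝ] ℝ, ∀ v w : E2, tsq l v w = tsq l w v := by
    intro l v w; simp [tsq, mul_comm]
  -- Kronecker delta facts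
  have mk : ∀ B : S2, (∀ v w : E2, B v w = B w v) → ∀ a b c : ℝ,
      (H₁ B - a) • tsq ℓ₁ + (H₂ B - b) • tsq ℓ₂ + (H₃ B - c) • tsq ℓ₃
        = (H₁ B • tsq ℓ₁ + H₂ B • tsq ℓ₂ + H₃ B • tsq ℓ₃) - B →
      H₁ B = a ∧ H₂ B = b ∧ H₃ B = c := by
    intro B hs a b c heq
    have hb := hbasis B hs
    have h0 : (H₁ B - a) • tsq ℓ₁ + (H₂ B - b) • tsq ℓ₂ + (H₃ B - c) • tsq ℓ₃ = 0 := by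
      rw [heq, ← hb, sub_self]
    obtain ⟨x, y, z⟩ := hindep _ _ _ h0
    exact ⟨by linarith, by linarith, by linarith⟩
  have del1 := mk (tsq ℓ₁) (hsymm ℓ₁) 1 0 0 (by module)
  have del2 := mk (tsq ℓ₂) (hsymm ℓ₂) 0 1 0 (by module)
  have del3 := mk (tsq ℓ₃) (hsymm ℓ₃) 0 0 1 (by module)
  obtain ⟨d11, d21, d31⟩ := del1
  obtain ⟨d12, d22, d32⟩ := del2
  obtain ⟨d13, d23, d33⟩ := del3
  -- scalar computations
  have hH2D2 : H₂ D₂ = H₂ D₁ + H₂ Err₁ := by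
    rw [h2]; simp [map_add, map_sub, map_smul, d21]
  have hH3D3 : H₃ D₃ = H₃ D₁ + H₃ Err₁ + H₃ Err₂ := by
    rw [h3, h2]; simp [map_add, map_sub, map_smul, d31, d32]
  have hD1 := hbasis D₁ hsD₁
  -- key identity
  have key : D₄ = (Err₁ + Err₂ + Err₃) + (-(H₂ Err₁)) • tsq ℓ₂
      + (-(H₃ Err₁ + H₃ Err₂)) • tsq ℓ₃ := by
    rw [h4, h3, h2]
    simp only [map_add, map_sub, map_smul, d21, d31, d32, smul_eq_mul, mul_zero,
      sub_zero, mul_one, add_zero, zero_mul]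
    linear_combination (norm := module) hD1
  -- norm estimates
  have b1 := bnorm_nonneg Err₁
  have b2 := bnorm_nonneg Err₂
  have b3 := bnorm_nonneg Err₃
  have bt2 := bnorm_nonneg (tsq ℓ₂)
  have bt3 := bnorm_nonneg (tsq ℓ₃)
  have hEsum : bnorm (Err₁ + Err₂ + Err₃) ≤ bnorm Err₁ + bnorm Err₂ + bnorm Err₃ := by
    calc bnorm (Err₁ + Err₂ + Err₃) ≤ bnorm (Err₁ + Err₂) + bnorm Err₃ := bnorm_add_le _ _
      _ ≤ _ := by linarith [bnorm_add_le Err₁ Err₂]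
  have hmain : bnorm D₄ ≤ (bnorm Err₁ + bnorm Err₂ + bnorm Err₃)
      + |H₂ Err₁| * bnorm (tsq ℓ₂) + |H₃ Err₁ + H₃ Err₂| * bnorm (tsq ℓ₃) := by
    rw [key]
    have step := bnorm_add_le ((Err₁ + Err₂ + Err₃) + (-(H₂ Err₁)) • tsq ℓ₂)
      ((-(H₃ Err₁ + H₃ Err₂)) • tsq ℓ₃)
    refine step.trans ?_
    · 
        have g1 := bnorm_add_le (Err₁ + Err₂ + Err₃) ((-(H₂ Err₁)) • tsq ℓ₂)
        have g2 := bnorm_smul_le (-(H₂ Err₁)) (tsq ℓ₂)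
        have g3 := bnorm_smul_le (-(H₃ Err₁ + H₃ Err₂)) (tsq ℓ₃)
        rw [abs_neg] at g2 g3
        linarith [hEsum]
  have k1 : |H₂ Err₁| ≤ hmax * bnorm Err₁ := (hH Err₁).2.1
  have k2 : |H₃ Err₁| ≤ hmax * bnorm Err₁ := (hH Err₁).2.2
  have k3 : |H₃ Err₂| ≤ hmax * bnorm Err₂ := (hH Err₂).2.2
  have k4 : |H₃ Err₁ + H₃ Err₂| ≤ hmax * (bnorm Err₁ + bnorm Err₂) := by
    calc |H₃ Err₁ + H₃ Err₂| ≤ |H₃ Err₁| + |H₃ Err₂| := abs_add_le _ _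
      _ ≤ _ := by linarith
  -- positivity of hmax
  have hone : (1:ℝ) ≤ hmax * bnorm (tsq ℓ₂) := by
    have := (hH (tsq ℓ₂)).2.1
    rw [d22] at this; simpa using this
  clear hbasis hindep hH hsD₁ hsD₂ hsD₃ hsD₄ hsE₁ hsE₂ hsE₃ hsymm mk h2 h3 h4 key hD1
  have hmax0 : 0 ≤ hmax := by nlinarith
  have c1 : |H₂ Err₁| * bnorm (tsq ℓ₂) ≤ hmax * (bnorm Err₁ + bnorm Err₂ + bnorm Err₃) * bnorm (tsq ℓ₂) := by
    refine mul_le_mul_of_nonneg_right (k1.trans ?_) bt2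
    exact mul_le_mul_of_nonneg_left (by linarith) hmax0
  have c2 : |H₃ Err₁ + H₃ Err₂| * bnorm (tsq ℓ₃) ≤ hmax * (bnorm Err₁ + bnorm Err₂ + bnorm Err₃) * bnorm (tsq ℓ₃) := by
    refine mul_le_mul_of_nonneg_right (k4.trans ?_) bt3
    exact mul_le_mul_of_nonneg_left (by linarith) hmax0
  have ringeq : (1 + hmax * bnorm (tsq ℓ₂) + hmax * bnorm (tsq ℓ₃))
      * (bnorm Err₁ + bnorm Err₂ + bnorm Err₃)
      = (bnorm Err₁ + bnorm Err₂ + bnorm Err₃)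
      + hmax * (bnorm Err₁ + bnorm Err₂ + bnorm Err₃) * bnorm (tsq ℓ₂)
      + hmax * (bnorm Err₁ + bnorm Err₂ + bnorm Err₃) * bnorm (tsq ℓ₃) := by ring
  rw [ringeq]
  linarith [hmain]
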